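/- For the system x0' = mκ(α0/(1+ρ0^m x0 + x1) − 1)x0, x1' = mκ(α1/(1 + x0 + ρ1^m x1) − 1)x1 with α1 > 1, the point E2 = (0, (α1−1)/ρ1^m) is an equilibrium; moreover, if ρ1^m < (α1 − 1)/(α0 − 1) with α0 > 1, then both eigenvalues mκ(α0/(1 + (α1−1)/ρ1^m) − 1) and mκ(1/α1 − 1) of the Jacobian at E2 are negative. -/

import Mathlib

/-- The planar vector field of the nondimensionalized two-population competition model. -/
noncomputable def tumorVF (m : ℕ) (κ α0 α1 ρ0 ρ1 : ℝ) (p : ℝ × ℝ) : ℝ × ℝ :=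
  ((m : ℝ) * κ * (α0 / (1 + ρ0 ^ m * p.1 + p.2) - 1) * p.1,
   (m : ℝ) * κ * (α1 / (1 + p.1 + ρ1 ^ m * p.2) - 1) * p.2)

lemma diag_mem_spectrum_fin_two (a b c : ℝ) :
    a ∈ spectrum ℝ (!![a, 0; c, b] : Matrix (Fin 2) (Fin 2) ℝ) := by
  rw [spectrum.mem_iff, Matrix.isUnit_iff_isUnit_det]
  have : (algebraMap ℝ (Matrix (Fin 2) (Fin 2) ℝ) a - !![a, 0; c, b]).det = 0 := by
    have h : algebraMap ℝ (Matrix (Fin 2) (Fin 2) ℝ) a - !![a, 0; c, b]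
        = !![0, 0; -c, a - b] := by
      rw [Matrix.algebraMap_eq_diagonal]
      ext i j
      fin_cases i <;> fin_cases j <;> simp [Matrix.diagonal]
    rw [h, Matrix.det_fin_two_of]; ring
  rw [this]; exact not_isUnit_zero

lemma diag_mem_spectrum_fin_two' (a b c : ℝ) :
    b ∈ spectrum ℝ (!![a, 0; c, b] : Matrix (Fin 2) (Fin 2) ℝ) := by
  rw [spectrum.mem_iff, Matrix.isUnit_iff_isUnit_det]
  have : (algebraMap ℝ (Matrix (Fin 2) (Fin 2) ℝ) b - !![a, 0; c, b]).det = 0 := by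
    have h : algebraMap ℝ (Matrix (Fin 2) (Fin 2) ℝ) b - !![a, 0; c, b]
        = !![b - a, 0; -c, 0] := by
      rw [Matrix.algebraMap_eq_diagonal]
      ext i j
      fin_cases i <;> fin_cases j <;> simp [Matrix.diagonal]
    rw [h, Matrix.det_fin_two_of]; ring
  rw [this]; exact not_isUnit_zero

/-- If `α1 > 1`, the point `E2 = (0, (α1-1)/ρ1^m)` is an equilibrium; moreover, if
`ρ1^m < (α1-1)/(α0-1)` with `α0 > 1`, then both eigenvalues of the Jacobian at `E2`,
namely `mκ(α0/(1+(α1-1)/ρ1^m) - 1)` and `mκ(1/α1 - 1)`, are negative. -/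
theorem E2_equilibrium_and_stable
    (m : ℕ) (κ α0 α1 ρ0 ρ1 : ℝ) (hm : 1 ≤ m) (hκ : 0 < κ)
    (hρ0 : 0 < ρ0) (hρ1 : 0 < ρ1) (hρ1' : ρ1 < 1)
    (hα1 : 1 < α1) (hα0 : 1 < α0) (hα : α1 < α0)
    (hcond : ρ1 ^ m < (α1 - 1) / (α0 - 1)) :
    let x1 : ℝ := (α1 - 1) / ρ1 ^ m
    let J : Matrix (Fin 2) (Fin 2) ℝ :=
      !![(m : ℝ) * κ * (α0 * (1 + x1) / (1 + ρ0 ^ m * 0 + x1) ^ 2 - 1),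
           -((m : ℝ) * κ * (α0 * 0 / (1 + ρ0 ^ m * 0 + x1) ^ 2));
         -((m : ℝ) * κ * (α1 * x1 / (1 + 0 + ρ1 ^ m * x1) ^ 2)),
           (m : ℝ) * κ * (α1 * (1 + 0) / (1 + 0 + ρ1 ^ m * x1) ^ 2 - 1)]
    tumorVF m κ α0 α1 ρ0 ρ1 (0, x1) = 0 ∧
    ((m : ℝ) * κ * (α0 / (1 + (α1 - 1) / ρ1 ^ m) - 1)) ∈ spectrum ℝ J ∧
    ((m : ℝ) * κ * (1 / α1 - 1)) ∈ spectrum ℝ J ∧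
    (m : ℝ) * κ * (α0 / (1 + (α1 - 1) / ρ1 ^ m) - 1) < 0 ∧
    (m : ℝ) * κ * (1 / α1 - 1) < 0 := by
  intro x1 J
  have hρm : (0:ℝ) < ρ1 ^ m := pow_pos hρ1 m
  have hx1 : (0:ℝ) < x1 := div_pos (by linarith) hρm
  have h1x1 : (0:ℝ) < 1 + x1 := by linarith
  have hmκ : (0:ℝ) < (m : ℝ) * κ := by
    have : (1:ℝ) ≤ (m:ℝ) := by exact_mod_cast hm
    positivity
  -- key simplification: 1 + ρ1^m * x1 = α1
  have hα1x : 1 + ρ1 ^ m * x1 = α1 := by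
    show 1 + ρ1 ^ m * ((α1 - 1) / ρ1 ^ m) = α1
    field_simp
    ring
  -- x1 > α0 - 1
  have hx1gt : α0 - 1 < x1 := by
    have h1 : ρ1 ^ m * (α0 - 1) < α1 - 1 :=
      (lt_div_iff₀ (by linarith : (0:ℝ) < α0 - 1)).mp hcond
    exact (lt_div_iff₀ hρm).mpr (by nlinarith)
  refine ⟨?_, ?_, ?_, ?_, ?_⟩
  · have h2 : 1 + (0:ℝ) + ρ1 ^ m * x1 = α1 := by rw [← hα1x]; ring
    simp only [tumorVF, Prod.mk_eq_zero]
    constructor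
    · norm_num
    · show (m : ℝ) * κ * (α1 / (1 + 0 + ρ1 ^ m * x1) - 1) * x1 = 0
      rw [h2, div_self (by linarith)]
      ring
  · have hJ : J 0 0 = (m : ℝ) * κ * (α0 / (1 + (α1 - 1) / ρ1 ^ m) - 1) := by
      show (m : ℝ) * κ * (α0 * (1 + x1) / (1 + ρ0 ^ m * 0 + x1) ^ 2 - 1) = _
      rw [show 1 + ρ0 ^ m * 0 + x1 = 1 + x1 by ring]
      rw [show α0 * (1 + x1) / (1 + x1) ^ 2 = α0 / (1 + x1) by
        field_simp]
    have hJ01 : J 0 1 = 0 := by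
      show -((m : ℝ) * κ * (α0 * 0 / (1 + ρ0 ^ m * 0 + x1) ^ 2)) = 0
      ring
    have : J = !![J 0 0, 0; J 1 0, J 1 1] := by
      rw [← hJ01]
      ext i j
      fin_cases i <;> fin_cases j <;> rfl
    rw [this, ← hJ]
    exact diag_mem_spectrum_fin_two _ _ _
  · have hJ : J 1 1 = (m : ℝ) * κ * (1 / α1 - 1) := by
      show (m : ℝ) * κ * (α1 * (1 + 0) / (1 + 0 + ρ1 ^ m * x1) ^ 2 - 1) = _
      rw [show 1 + (0:ℝ) + ρ1 ^ m * x1 = α1 by rw [← hα1x]; ring]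
      rw [show α1 * (1 + 0) / α1 ^ 2 = 1 / α1 by
        field_simp; ring]
    have hJ01 : J 0 1 = 0 := by
      show -((m : ℝ) * κ * (α0 * 0 / (1 + ρ0 ^ m * 0 + x1) ^ 2)) = 0
      ring
    have : J = !![J 0 0, 0; J 1 0, J 1 1] := by
      rw [← hJ01]
      ext i j
      fin_cases i <;> fin_cases j <;> rfl
    rw [this, ← hJ]
    exact diag_mem_spectrum_fin_two' _ _ _
  · have : α0 / (1 + (α1 - 1) / ρ1 ^ m) < 1 := by
      rw [div_lt_one (by exact h1x1)]
      linarith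
    nlinarith
  · have : 1 / α1 < 1 := by
      rw [div_lt_one (by linarith)]; linarith
    nlinarith
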